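/- For every k ≥ 1, the complete graph on k+1 vertices (which is k-edge-connected) with any choice of destination vertex d admits a (k−1)-resilient set of deterministic routing functions. -/

import Mathlib

open scoped Classical

namespace Srr

/-- A multigraph on vertex type `V` with edge-name type `E`: every edge name is
assigned its (unordered) pair of endpoints; parallel edges are allowed. -/
structure Multigraph (V E : Type) where
  ends : E → Sym2 V

namespace Multigraph

variable {V E : Type}

/-- Walks in a multigraph. -/
inductive Walk (G : Multigraph V E) : V → V → Type
  | nil (v : V) : Walk G v v
  | cons {u v w : V} (e : E) (h : G.ends e = s(u, v)) (p : Walk G v w) : Walk G u w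

namespace Walk

/-- The edges of a walk, in order. -/
def edges {G : Multigraph V E} : ∀ {u v : V}, G.Walk u v → List E
  | _, _, nil _ => []
  | _, _, cons e _ p => e :: edges p

/-- The vertices visited by a walk, in order. -/
def support {G : Multigraph V E} : ∀ {u v : V}, G.Walk u v → List V
  | _, _, nil v => [v]
  | u, _, cons _ _ p => u :: support p

/-- A walk is a path if it visits no vertex twice. -/
def IsPath {G : Multigraph V E} {u v : V} (p : G.Walk u v) : Prop :=
  p.support.Nodup

end Walk

/-- `G` is `k`-edge-connected: between every pair of distinct vertices there
exist `k` pairwise edge-disjoint paths. -/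
def EdgeConnected (G : Multigraph V E) (k : ℕ) : Prop :=
  ∀ u v : V, u ≠ v → ∃ P : Fin k → G.Walk u v,
    (∀ i, (P i).IsPath) ∧
    ∀ i j : Fin k, i ≠ j → ∀ e : E, e ∈ (P i).edges → e ∉ (P j).edges

/-- `s` is still connected to `d` after the edges of `F` have failed. -/
def ConnAvoiding (G : Multigraph V E) (F : Finset E) (s d : V) : Prop :=
  ∃ p : G.Walk s d, ∀ e ∈ p.edges, e ∉ F

/-- The active (non-failed) edges incident to `v`, given the failed set `F`. -/
noncomputable def activeAt [Fintype E] (G : Multigraph V E) (F : Finset E) (v : V) :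
    Finset E :=
  Finset.univ.filter (fun e => v ∈ G.ends e ∧ e ∉ F)

end Multigraph

/-- A static deterministic destination-based set of routing functions: for each
vertex, a map from (incoming edge, `none` if the packet originates there;
set of active incident edges) to a chosen outgoing edge. -/
def Routing (V E : Type) : Type := V → Option E → Finset E → E

/-- Header-rewriting routing functions with a 3-bit (8-valued) header. -/
def HRouting (V E : Type) : Type := V → Option E → Finset E → Fin 8 → E × Fin 8

/-- Duplication routing functions: the output is the set of edges along which
copies of the packet are sent. -/
def DRouting (V E : Type) : Type := V → Option E → Finset E → Finset E

/-- `σ` (the "next" map) describes a circular order on `Fin k`: iterating `σ`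
from any index visits every index. -/
def IsCircularOrder {k : ℕ} (σ : Fin k → Fin k) : Prop :=
  ∀ i j : Fin k, ∃ m : ℕ, σ^[m] i = j

/-- Whether the second component (the arborescence in use) changes between
times `m` and `m+1` of a run. -/
noncomputable def switchAt {α β : Type} (run : ℕ → Option (α × β)) (m : ℕ) : Bool :=
  match run m, run (m + 1) with
  | some p, some q => decide (p.2 ≠ q.2)
  | _, _ => false

/-- The number of switches of the second component during the first `n` steps
of a run. -/
noncomputable def switchCount {α β : Type} (run : ℕ → Option (α × β)) (n : ℕ) : ℕ :=
  ((List.range n).filter (fun m => switchAt run m)).length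

namespace Multigraph

variable {V E : Type} [Fintype V] [Fintype E]

/-- One forwarding step of a packet under routing `f` and failed edge set `F`;
a state is (current vertex, incoming edge or `none`). The step is only
possible when the chosen edge is incident to the current vertex and has not
failed. -/
def RStep (G : Multigraph V E) (f : Routing V E) (F : Finset E)
    (p q : V × Option E) : Prop :=
  ∃ w : V,
    f p.1 p.2 (G.activeAt F p.1) ∉ F ∧
    G.ends (f p.1 p.2 (G.activeAt F p.1)) = s(p.1, w) ∧
    q = (w, some (f p.1 p.2 (G.activeAt F p.1)))

/-- Under failed edges `F`, a packet originated at `s` reaches `d` in finitely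
many steps. -/
def Delivers (G : Multigraph V E) (f : Routing V E) (F : Finset E) (d s : V) : Prop :=
  ∃ i : Option E, Relation.ReflTransGen (G.RStep f F) (s, none) (d, i)

/-- `f` is a `k`-resilient routing towards destination `d`. -/
def Resilient (G : Multigraph V E) (f : Routing V E) (d : V) (k : ℕ) : Prop :=
  ∀ F : Finset E, F.card ≤ k → ∀ s : V, G.ConnAvoiding F s d → G.Delivers f F d s

/-- A `d`-rooted spanning arborescence of the directed copy of `G`: every
vertex `v ≠ d` has exactly one outgoing arc, which goes along the edge
`edge v` towards `parent v`; `d` has no outgoing arc; following `parent`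
from any vertex reaches `d` (hence every vertex has a unique directed path
to `d` in the arborescence). -/
structure Arborescence (G : Multigraph V E) (d : V) where
  parent : V → V
  edge : V → E
  parent_root : parent d = d
  ends_eq : ∀ v : V, v ≠ d → G.ends (edge v) = s(v, parent v)
  reaches_root : ∀ v : V, ∃ n : ℕ, parent^[n] v = d

namespace Arborescence

/-- Two arborescences are arc-disjoint: no directed arc (identified by its
tail vertex together with the underlying edge) lies in both. -/
def ArcDisjoint {G : Multigraph V E} {d : V} (T₁ T₂ : G.Arborescence d) : Prop :=
  ∀ v : V, v ≠ d → T₁.edge v ≠ T₂.edge v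

/-- `T₁` and `T₂` share an edge `{v,w}` of `G` if the arc `(v,w)` is in `T₁`
and the reversed arc `(w,v)` (of the same underlying edge) is in `T₂`. -/
def SharesEdge {G : Multigraph V E} {d : V} (T₁ T₂ : G.Arborescence d) : Prop :=
  ∃ v w : V, v ≠ d ∧ w ≠ d ∧
    T₁.parent v = w ∧ T₂.parent w = v ∧ T₁.edge v = T₂.edge w

/-- The unique directed path in `T` from `u` to `d` contains no failed edge. -/
def GoodFrom {G : Multigraph V E} {d : V} (T : G.Arborescence d)
    (F : Finset E) (u : V) : Prop :=
  ∀ n : ℕ, T.parent^[n] u ≠ d → T.edge (T.parent^[n] u) ∉ F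

end Arborescence

/-- The next arborescence used at vertex `v` when the current one is `i`: the
first arborescence in the circular order (starting with `i` itself) whose
outgoing edge at `v` has not failed, if any. -/
noncomputable def nextIdx (G : Multigraph V E) {k : ℕ} {d : V}
    (T : Fin k → G.Arborescence d) (σ : Fin k → Fin k) (F : Finset E)
    (v : V) (i : Fin k) : Option (Fin k) :=
  ((List.range k).map (fun m => σ^[m] i)).find? (fun j => decide ((T j).edge v ∉ F))

/-- One step of circular-arborescence routing; a state is
(current vertex, current arborescence). -/
noncomputable def caStep (G : Multigraph V E) {k : ℕ} {d : V}
    (T : Fin k → G.Arborescence d) (σ : Fin k → Fin k) (F : Finset E)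
    (p : V × Fin k) : Option (V × Fin k) :=
  if p.1 = d then none
  else (G.nextIdx T σ F p.1 p.2).map (fun j => ((T j).parent p.1, j))

/-- The trajectory of a packet under circular-arborescence routing, starting
at `s` on arborescence `i₀`. -/
noncomputable def caRun (G : Multigraph V E) {k : ℕ} {d : V}
    (T : Fin k → G.Arborescence d) (σ : Fin k → Fin k) (F : Finset E)
    (s : V) (i₀ : Fin k) : ℕ → Option (V × Fin k)
  | 0 => some (s, i₀)
  | n + 1 => (G.caRun T σ F s i₀ n).bind (G.caStep T σ F)

/-- One step of the two-phase routing `R` built from `m+1` arborescences: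
in state `(v, none)` the packet is routed canonically along the last
arborescence `T (Fin.last m)`; when it hits a failed edge `{x,y}` there, it
switches to the circular-arborescence routing on the first `m` arborescences,
starting from the one containing the reversed arc `(y,x)`; states `(v, some i)`
perform this circular routing. -/
noncomputable def rStep2 (G : Multigraph V E) {m : ℕ} {d : V}
    (T : Fin (m + 1) → G.Arborescence d) (σ : Fin m → Fin m) (F : Finset E)
    (p : V × Option (Fin m)) : Option (V × Option (Fin m)) :=
  if p.1 = d then none
  else
    match p.2 with
    | none =>
        if (T (Fin.last m)).edge p.1 ∈ F then
          ((List.finRange m).find? (fun j =>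
              decide ((T j.castSucc).edge ((T (Fin.last m)).parent p.1) =
                  (T (Fin.last m)).edge p.1 ∧
                (T j.castSucc).parent ((T (Fin.last m)).parent p.1) = p.1))).map
            (fun j => (p.1, some j))
        else some ((T (Fin.last m)).parent p.1, none)
    | some i =>
        (G.nextIdx (fun j => T j.castSucc) σ F p.1 i).map
          (fun j => ((T j.castSucc).parent p.1, some j))

/-- The trajectory of a packet under the two-phase routing `R`. -/
noncomputable def rRun2 (G : Multigraph V E) {m : ℕ} {d : V}
    (T : Fin (m + 1) → G.Arborescence d) (σ : Fin m → Fin m) (F : Finset E)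
    (s : V) : ℕ → Option (V × Option (Fin m))
  | 0 => some (s, none)
  | n + 1 => (G.rRun2 T σ F s n).bind (G.rStep2 T σ F)

/-- `π` is a circular ordering of the edges incident to `v`. -/
def IsCircAt (G : Multigraph V E) (v : V) (π : E → E) : Prop :=
  (∀ e : E, v ∈ G.ends e → v ∈ G.ends (π e)) ∧
  (∀ e : E, ¬ v ∈ G.ends e → π e = e) ∧
  (∀ e e' : E, v ∈ G.ends e → v ∈ G.ends e' → ∃ m : ℕ, π^[m] e = e')

/-- The first non-failed edge strictly after `e` in the circular order `π`
among the active edges `A`. -/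
noncomputable def nextCirc (π : E → E) (e : E) (A : Finset E) : Option E :=
  ((List.range (Fintype.card E)).map (fun m => π^[m + 1] e)).find?
    (fun e' => decide (e' ∈ A))

/-- A routing is vertex-circular: every vertex has a circular ordering of its
incident edges, and a packet received along `e` is forwarded through the next
non-failed edge after `e` in this circular order. -/
def IsVertexCircular (G : Multigraph V E) (f : Routing V E) : Prop :=
  ∀ v : V, ∃ π : E → E, G.IsCircAt v π ∧
    ∀ e : E, v ∈ G.ends e → ∀ A : Finset E, ∀ r : E,
      nextCirc π e A = some r → f v (some e) A = r

/-- A routing is vertex-connectivity-resilient: every packet originated at a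
vertex having `k` pairwise edge-disjoint paths to `d` reaches `d` whenever
fewer than `k` edges fail. -/
def VertexConnResilient (G : Multigraph V E) (d : V) (f : Routing V E) : Prop :=
  ∀ v : V, ∀ k : ℕ,
    (∃ P : Fin k → G.Walk v d, (∀ i, (P i).IsPath) ∧
      ∀ i j : Fin k, i ≠ j → ∀ e : E, e ∈ (P i).edges → e ∉ (P j).edges) →
    ∀ F : Finset E, F.card < k → G.Delivers f F d v

/-- One step of header-rewriting routing; a state is
(current vertex, incoming edge, current 3-bit header). -/
def HStep (G : Multigraph V E) (f : HRouting V E) (F : Finset E)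
    (p q : V × Option E × Fin 8) : Prop :=
  ∃ w : V,
    (f p.1 p.2.1 (G.activeAt F p.1) p.2.2).1 ∉ F ∧
    G.ends (f p.1 p.2.1 (G.activeAt F p.1) p.2.2).1 = s(p.1, w) ∧
    q = (w, some (f p.1 p.2.1 (G.activeAt F p.1) p.2.2).1,
         (f p.1 p.2.1 (G.activeAt F p.1) p.2.2).2)

/-- The endpoint of `e` other than `v` (an arbitrary vertex if `e` is not
incident to `v`; `v` itself if `e` is a loop at `v`). -/
noncomputable def otherEnd (G : Multigraph V E) (v : V) (e : E) : V :=
  if h : ∃ w : V, G.ends e = s(v, w) then h.choose else v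

/-- The copies produced from packet state `p` in one step of duplication
routing: one copy along each chosen non-failed incident edge; no copies once
the packet is at `d`. -/
noncomputable def dchildren (G : Multigraph V E) (f : DRouting V E) (F : Finset E)
    (d : V) (p : V × Option E) : Multiset (V × Option E) :=
  if p.1 = d then 0
  else ((f p.1 p.2 (G.activeAt F p.1) ∩ G.activeAt F p.1).val.map
      (fun e => (G.otherEnd p.1 e, some e)))

/-- The multiset of packet-copy states after `n` steps of duplication routing
of a packet originated at `s`. -/
noncomputable def dlevel (G : Multigraph V E) (f : DRouting V E) (F : Finset E)
    (d : V) (s : V) : ℕ → Multiset (V × Option E)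
  | 0 => {(s, none)}
  | n + 1 => (G.dlevel f F d s n).bind (G.dchildren f F d)

/-- The total number of new copies of the packet created during the first `N`
steps of duplication routing. -/
noncomputable def dcreated (G : Multigraph V E) (f : DRouting V E) (F : Finset E)
    (d : V) (s : V) (N : ℕ) : ℕ :=
  ∑ n ∈ Finset.range N,
    ((G.dlevel f F d s n).map (fun p => (G.dchildren f F d p).card - 1)).sum

/-- Two vertices are joined by a walk in the multigraph. -/
def Reach (G : Multigraph V E) : V → V → Prop :=
  Relation.ReflTransGen (fun u v => ∃ e : E, G.ends e = s(u, v))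

/-- The connected component of `v`. -/
noncomputable def compOf (G : Multigraph V E) (v : V) : Finset V :=
  Finset.univ.filter (fun w => G.Reach v w)

/-- The edges with all endpoints inside `S`. -/
noncomputable def edgesIn (G : Multigraph V E) (S : Finset V) : Finset E :=
  Finset.univ.filter (fun e => ∀ x ∈ G.ends e, x ∈ S)

/-- A set of vertices forms a tree component: it is connected, carries no
self-loop, and the number of its edges is its number of vertices minus one. -/
def IsTreeComp (G : Multigraph V E) (S : Finset V) : Prop :=
  (∀ u ∈ S, ∀ w ∈ S, G.Reach u w) ∧
  (∀ e ∈ G.edgesIn S, ¬ (G.ends e).IsDiag) ∧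
  (G.edgesIn S).card = S.card - 1

end Multigraph

/-- The multigraph associated with a simple graph: the edge names are the
edges of the simple graph. -/
def toMG {W : Type} (G : SimpleGraph W) : Multigraph W G.edgeSet :=
  ⟨fun e => (e : Sym2 W)⟩

/-- A simple graph is planar: it has an embedding in the plane. Vertices are
mapped to distinct points, every edge to a simple continuous arc between the
images of its endpoints, arcs pass through no other vertex, and two distinct
arcs may only meet at images of vertices (hence only at shared endpoints). -/
def IsPlanar {W : Type} (G : SimpleGraph W) : Prop :=
  ∃ (p : W → ℝ × ℝ) (arc : W → W → Set (ℝ × ℝ)),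
    Function.Injective p ∧
    (∀ u v : W, arc u v = arc v u) ∧
    (∀ u v : W, G.Adj u v → ∃ γ : ℝ → ℝ × ℝ,
      ContinuousOn γ (Set.Icc 0 1) ∧ Set.InjOn γ (Set.Icc 0 1) ∧
      γ 0 = p u ∧ γ 1 = p v ∧ arc u v = γ '' Set.Icc 0 1) ∧
    (∀ u v w : W, G.Adj u v → p w ∈ arc u v → w = u ∨ w = v) ∧
    (∀ u v x y : W, G.Adj u v → G.Adj x y → s(u, v) ≠ s(x, y) →
      arc u v ∩ arc x y ⊆ Set.range p)

end Srr

namespace Srr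

/-- For every `k ≥ 1`, the complete graph on `k+1` vertices, with any
destination `d`, admits a `(k-1)`-resilient set of deterministic routing
functions. -/

abbrev Et (k : ℕ) : Type := (⊤ : SimpleGraph (Fin (k + 1))).edgeSet

lemma fin_zero_ne_one (k : ℕ) (hk : 1 ≤ k) : (0 : Fin (k + 1)) ≠ (1 : Fin (k + 1)) := by
  have h1 : (1 : Fin (k + 1)).val = 1 := by
    rw [Fin.val_one']; exact Nat.mod_eq_of_lt (by omega)
  intro h; rw [Fin.ext_iff, h1] at h; simp at h

noncomputable def defE (k : ℕ) (hk : 1 ≤ k) : Et k :=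
  ⟨s((0 : Fin (k + 1)), (1 : Fin (k + 1))), by simpa using fin_zero_ne_one k hk⟩

noncomputable def eo (k : ℕ) (hk : 1 ≤ k) (v w : Fin (k + 1)) : Et k :=
  if h : v ≠ w then ⟨s(v, w), by simpa using h⟩ else defE k hk

lemma eo_val (k : ℕ) (hk : 1 ≤ k) {v w : Fin (k + 1)} (h : v ≠ w) :
    ((eo k hk v w : Et k) : Sym2 (Fin (k + 1))) = s(v, w) := by
  simp [eo, h]

noncomputable def Sset (k : ℕ) (hk : 1 ≤ k) (d v : Fin (k + 1)) (A : Finset (Et k)) :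
    Finset (Fin (k + 1)) :=
  Finset.univ.filter (fun w => w ≠ v ∧ w ≠ d ∧ eo k hk v w ∈ A)

lemma mem_Sset (k : ℕ) (hk : 1 ≤ k) (d v : Fin (k + 1)) (A : Finset (Et k)) (w : Fin (k + 1)) :
    w ∈ Sset k hk d v A ↔ w ≠ v ∧ w ≠ d ∧ eo k hk v w ∈ A := by
  simp [Sset]

noncomputable def tgt (k : ℕ) (hk : 1 ≤ k) (d v : Fin (k + 1)) (A : Finset (Et k)) :
    Fin (k + 1) :=
  if h : (Sset k hk d v A).Nonempty then
    Classical.choose ((Sset k hk d v A).exists_min_image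
      (fun w => ((w - v : Fin (k + 1)) : ℕ)) h)
  else v

lemma tgt_spec (k : ℕ) (hk : 1 ≤ k) (d v : Fin (k + 1)) (A : Finset (Et k))
    (h : (Sset k hk d v A).Nonempty) :
    tgt k hk d v A ∈ Sset k hk d v A ∧
      ∀ w ∈ Sset k hk d v A,
        ((tgt k hk d v A - v : Fin (k + 1)) : ℕ) ≤ ((w - v : Fin (k + 1)) : ℕ) := by
  simp only [tgt, dif_pos h]
  exact Classical.choose_spec ((Sset k hk d v A).exists_min_image
    (fun w => ((w - v : Fin (k + 1)) : ℕ)) h)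

noncomputable def myf (k : ℕ) (hk : 1 ≤ k) (d : Fin (k + 1)) : Routing (Fin (k + 1)) (Et k) :=
  fun v _ A =>
    if v = d then defE k hk
    else if eo k hk v d ∈ A then eo k hk v d
    else eo k hk v (tgt k hk d v A)

noncomputable def Av (k : ℕ) (F : Finset (Et k)) (v : Fin (k + 1)) : Finset (Et k) :=
  (toMG (⊤ : SimpleGraph (Fin (k + 1)))).activeAt F v

lemma mem_Av (k : ℕ) (hk : 1 ≤ k) (F : Finset (Et k)) {v w : Fin (k + 1)} (h : v ≠ w) :
    (eo k hk v w ∈ Av k F v) ↔ eo k hk v w ∉ F := by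
  simp only [Av, Multigraph.activeAt, Finset.mem_filter, Finset.mem_univ, true_and]
  have he : (toMG (⊤ : SimpleGraph (Fin (k + 1)))).ends (eo k hk v w) = s(v, w) := eo_val k hk h
  rw [he]
  simp

/-- the forwarding function on vertices induced by `myf` under failures `F` -/
noncomputable def gfun (k : ℕ) (hk : 1 ≤ k) (d : Fin (k + 1)) (F : Finset (Et k))
    (v : Fin (k + 1)) : Fin (k + 1) :=
  if v = d then d
  else if eo k hk v d ∈ F then tgt k hk d v (Av k F v) else d

lemma fin_one_le_val {k : ℕ} {a : Fin (k + 1)} (h : a ≠ 0) : 1 ≤ a.val := by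
  rcases Nat.eq_zero_or_pos a.val with h0 | h0
  · exact absurd (Fin.ext (by simpa using h0)) h
  · omega

lemma Sset_nonempty (k : ℕ) (hk : 1 ≤ k) (d : Fin (k + 1)) (F : Finset (Et k))
    (hF : F.card ≤ k - 1) (v : Fin (k + 1)) (hvd : v ≠ d) (hvF : eo k hk v d ∈ F) :
    (Sset k hk d v (Av k F v)).Nonempty := by
  by_contra hS
  rw [Finset.not_nonempty_iff_eq_empty] at hS
  have hall : ∀ w : Fin (k + 1), w ≠ v → eo k hk v w ∈ F := by
    intro w hw
    by_cases hwd : w = d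
    · subst hwd; exact hvF
    · have : w ∉ Sset k hk d v (Av k F v) := by rw [hS]; exact Finset.notMem_empty w
      rw [mem_Sset] at this
      push_neg at this
      have h2 := this hw hwd
      rw [mem_Av k hk F (Ne.symm hw)] at h2
      exact not_not.mp h2
  have hcard : (Finset.univ.filter (· ≠ v)).card ≤ F.card := by
    apply Finset.card_le_card_of_injOn (fun w => eo k hk v w)
    · intro w hw
      rw [Finset.mem_coe, Finset.mem_filter] at hw
      exact hall w hw.2
    · intro w hw w' hw' he
      rw [Finset.coe_filter] at hw hw'
      simp only [Set.mem_setOf_eq] at hw hw'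
      have := congrArg (fun e : Et k => (e : Sym2 (Fin (k + 1)))) he
      simp only at this
      rw [eo_val k hk (Ne.symm hw.2), eo_val k hk (Ne.symm hw'.2)] at this
      rcases Sym2.eq_iff.mp this with ⟨_, h2⟩ | ⟨h1, h2⟩
      · exact h2
      · exact absurd h1.symm hw'.2
  have hkcard : (Finset.univ.filter (· ≠ v)).card = k := by
    rw [Finset.filter_ne' Finset.univ v, Finset.card_erase_of_mem (Finset.mem_univ v)]
    simp
  omega

lemma gfun_step (k : ℕ) (hk : 1 ≤ k) (d : Fin (k + 1)) (F : Finset (Et k))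
    (hF : F.card ≤ k - 1) (v : Fin (k + 1)) (hvd : v ≠ d) (o : Option (Et k)) :
    (toMG (⊤ : SimpleGraph (Fin (k + 1)))).RStep (myf k hk d) F (v, o)
      (gfun k hk d F v, some (myf k hk d v o (Av k F v))) := by
  by_cases hA : eo k hk v d ∈ Av k F v
  · have hnF : eo k hk v d ∉ F := (mem_Av k hk F hvd).mp hA
    have hfe : myf k hk d v o (Av k F v) = eo k hk v d := by
      simp [myf, hvd, hA]
    have hg : gfun k hk d F v = d := by simp [gfun, hvd, hnF]
    refine ⟨d, ?_, ?_, ?_⟩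
    · show myf k hk d v o (Av k F v) ∉ F
      rw [hfe]; exact hnF
    · show (toMG (⊤ : SimpleGraph (Fin (k + 1)))).ends (myf k hk d v o (Av k F v)) = s(v, d)
      rw [hfe]; exact eo_val k hk hvd
    · rw [hg]; rfl
  · have hvF : eo k hk v d ∈ F := by
      by_contra h
      exact hA ((mem_Av k hk F hvd).mpr h)
    have hS := Sset_nonempty k hk d F hF v hvd hvF
    obtain ⟨hu, _⟩ := tgt_spec k hk d v (Av k F v) hS
    rw [mem_Sset] at hu
    obtain ⟨huv, hud, huA⟩ := hu
    have hfe : myf k hk d v o (Av k F v) = eo k hk v (tgt k hk d v (Av k F v)) := by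
      simp [myf, hvd, hA]
    have hg : gfun k hk d F v = tgt k hk d v (Av k F v) := by simp [gfun, hvd, hvF]
    refine ⟨tgt k hk d v (Av k F v), ?_, ?_, ?_⟩
    · show myf k hk d v o (Av k F v) ∉ F
      rw [hfe]
      exact (mem_Av k hk F (Ne.symm huv)).mp huA
    · show (toMG (⊤ : SimpleGraph (Fin (k + 1)))).ends (myf k hk d v o (Av k F v))
        = s(v, tgt k hk d v (Av k F v))
      rw [hfe]; exact eo_val k hk (Ne.symm huv)
    · rw [hg]; rfl

lemma gfun_reaches (k : ℕ) (hk : 1 ≤ k) (d : Fin (k + 1)) (F : Finset (Et k))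
    (hF : F.card ≤ k - 1) (s : Fin (k + 1)) :
    ∃ n : ℕ, (gfun k hk d F)^[n] s = d := by
  by_contra hno
  push_neg at hno
  set g := gfun k hk d F with hgdef
  set O : Finset (Fin (k + 1)) := Finset.univ.filter (fun w => ∃ n : ℕ, g^[n] s = w) with hO
  have hsO : s ∈ O := by
    rw [hO, Finset.mem_filter]; exact ⟨Finset.mem_univ s, 0, rfl⟩
  have hOg : ∀ v ∈ O, g v ∈ O := by
    intro v hv
    rw [hO, Finset.mem_filter] at hv ⊢
    obtain ⟨_, n, hn⟩ := hv
    exact ⟨Finset.mem_univ _, n + 1, by rw [Function.iterate_succ_apply', hn]⟩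
  have hOd : ∀ v ∈ O, v ≠ d := by
    intro v hv
    rw [hO, Finset.mem_filter] at hv
    obtain ⟨_, n, hn⟩ := hv
    intro h; exact hno n (by rw [hn, h])
  have hOF : ∀ v ∈ O, eo k hk v d ∈ F := by
    intro v hv
    by_contra h
    have : g v = d := by simp [hgdef, gfun, hOd v hv, h]
    exact hOd (g v) (hOg v hv) this
  -- the closest orbit vertex to w
  have hOne : O.Nonempty := ⟨s, hsO⟩
  set cmin : Fin (k + 1) → Fin (k + 1) := fun w =>
    Classical.choose (O.exists_min_image (fun v => ((w - v : Fin (k + 1)) : ℕ)) hOne)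
    with hcmin
  have cmin_spec : ∀ w : Fin (k + 1), cmin w ∈ O ∧
      ∀ v ∈ O, ((w - cmin w : Fin (k + 1)) : ℕ) ≤ ((w - v : Fin (k + 1)) : ℕ) := by
    intro w
    exact Classical.choose_spec (O.exists_min_image (fun v => ((w - v : Fin (k + 1)) : ℕ)) hOne)
  set φ : Fin (k + 1) → Et k := fun w =>
    if w ∈ O then eo k hk w d else eo k hk (cmin w) w with hφ
  have hmaps : ∀ w ∈ Finset.univ.filter (· ≠ d), φ w ∈ F := by
    intro w hw
    rw [Finset.mem_filter] at hw
    have hwd : w ≠ d := hw.2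
    by_cases hwO : w ∈ O
    · simp only [hφ, if_pos hwO]
      exact hOF w hwO
    · simp only [hφ, if_neg hwO]
      obtain ⟨hcO, hcmin2⟩ := cmin_spec w
      set v := cmin w with hv
      have hvd : v ≠ d := hOd v hcO
      have hvF : eo k hk v d ∈ F := hOF v hcO
      have hS := Sset_nonempty k hk d F hF v hvd hvF
      obtain ⟨huS, humin⟩ := tgt_spec k hk d v (Av k F v) hS
      set u := tgt k hk d v (Av k F v) with hu
      have huO : u ∈ O := by
        have : g v = u := by simp [hgdef, gfun, hvd, hvF, hu]
        rw [← this]; exact hOg v hcO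
      rw [mem_Sset] at huS
      obtain ⟨huv, hud, huA⟩ := huS
      have hwv : w ≠ v := fun h => hwO (h ▸ hcO)
      have hwu : w ≠ u := fun h => hwO (h ▸ huO)
      -- w is strictly between v and u = g v in cyclic order
      have hlt : ((w - v : Fin (k + 1)) : ℕ) < ((u - v : Fin (k + 1)) : ℕ) := by
        by_contra hle
        push_neg at hle
        have hne : ((u - v : Fin (k + 1)) : ℕ) ≠ ((w - v : Fin (k + 1)) : ℕ) := by
          intro h
          have : u - v = w - v := Fin.ext (by simpa using h)
          exact hwu (sub_left_injective this).symm
        have hlt' : ((u - v : Fin (k + 1)) : ℕ) < ((w - v : Fin (k + 1)) : ℕ) :=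
          lt_of_le_of_ne hle hne
        have hsub : w - u = (w - v) - (u - v) := (sub_sub_sub_cancel_right w u v).symm
        have huvle : (u - v) ≤ (w - v) := by
          rw [Fin.le_def]; exact le_of_lt hlt'
        have hval : ((w - u : Fin (k + 1)) : ℕ)
            = ((w - v : Fin (k + 1)) : ℕ) - ((u - v : Fin (k + 1)) : ℕ) := by
          rw [hsub, Fin.sub_val_of_le huvle]
        have huvpos : 1 ≤ ((u - v : Fin (k + 1)) : ℕ) :=
          fin_one_le_val (sub_ne_zero.mpr huv)
        have : ((w - u : Fin (k + 1)) : ℕ) < ((w - v : Fin (k + 1)) : ℕ) := by omega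
        exact absurd (hcmin2 u huO) (by omega)
      -- hence w ∉ Sset, so its edge to v failed
      have hwS : w ∉ Sset k hk d v (Av k F v) := by
        intro hmem
        exact absurd (humin w hmem) (by omega)
      rw [mem_Sset] at hwS
      push_neg at hwS
      have h2 := hwS hwv hwd
      rw [mem_Av k hk F (Ne.symm hwv)] at h2
      exact not_not.mp h2
  have hinj : Set.InjOn φ (Finset.univ.filter (· ≠ d)) := by
    intro w hw w' hw' he
    rw [Finset.coe_filter] at hw hw'
    simp only [Set.mem_setOf_eq] at hw hw'
    have hwd : w ≠ d := hw.2
    have hwd' : w' ≠ d := hw'.2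
    have hval := congrArg (fun e : Et k => (e : Sym2 (Fin (k + 1)))) he
    by_cases hwO : w ∈ O <;> by_cases hwO' : w' ∈ O
    · simp only [hφ, if_pos hwO, if_pos hwO'] at hval
      rw [eo_val k hk hwd, eo_val k hk hwd'] at hval
      rcases Sym2.eq_iff.mp hval with ⟨h1, _⟩ | ⟨h1, _⟩
      · exact h1
      · exact absurd h1 hwd
    · simp only [hφ, if_pos hwO, if_neg hwO'] at hval
      have hc' : cmin w' ≠ w' := fun h => hwO' (h ▸ (cmin_spec w').1)
      rw [eo_val k hk hwd, eo_val k hk hc'] at hval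
      rcases Sym2.eq_iff.mp hval with ⟨_, h2⟩ | ⟨_, h2⟩
      · exact absurd h2.symm hwd'
      · exact absurd h2.symm (hOd _ (cmin_spec w').1)
    · simp only [hφ, if_neg hwO, if_pos hwO'] at hval
      have hc : cmin w ≠ w := fun h => hwO (h ▸ (cmin_spec w).1)
      rw [eo_val k hk hc, eo_val k hk hwd'] at hval
      rcases Sym2.eq_iff.mp hval with ⟨_, h2⟩ | ⟨_, h2⟩
      · exact absurd h2 hwd
      · exact h2
    · simp only [hφ, if_neg hwO, if_neg hwO'] at hval
      have hc : cmin w ≠ w := fun h => hwO (h ▸ (cmin_spec w).1)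
      have hc' : cmin w' ≠ w' := fun h => hwO' (h ▸ (cmin_spec w').1)
      rw [eo_val k hk hc, eo_val k hk hc'] at hval
      rcases Sym2.eq_iff.mp hval with ⟨_, h2⟩ | ⟨_, h2⟩
      · exact h2
      · exact absurd (show w ∈ O from h2.symm ▸ (cmin_spec w').1) hwO
  have hcard : (Finset.univ.filter (· ≠ d)).card ≤ F.card :=
    Finset.card_le_card_of_injOn φ hmaps hinj
  have hkcard : (Finset.univ.filter (· ≠ d)).card = k := by
    rw [Finset.filter_ne' Finset.univ d, Finset.card_erase_of_mem (Finset.mem_univ d)]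
    simp
  omega

theorem statement_8 (k : ℕ) (hk : 1 ≤ k) (d : Fin (k + 1)) :
    ∃ f : Routing (Fin (k + 1)) (⊤ : SimpleGraph (Fin (k + 1))).edgeSet,
      (toMG (⊤ : SimpleGraph (Fin (k + 1)))).Resilient f d (k - 1) := by
  refine ⟨myf k hk d, ?_⟩
  intro F hF s _
  obtain ⟨n, hn⟩ := gfun_reaches k hk d F hF s
  have main : ∀ n : ℕ, ∀ v : Fin (k + 1), (gfun k hk d F)^[n] v = d →
      ∀ o : Option (Et k), ∃ i : Option (Et k),
        Relation.ReflTransGen ((toMG (⊤ : SimpleGraph (Fin (k + 1)))).RStep (myf k hk d) F)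
          (v, o) (d, i) := by
    intro n
    induction n with
    | zero =>
      intro v h o
      simp only [Function.iterate_zero, id] at h
      subst h
      exact ⟨o, Relation.ReflTransGen.refl⟩
    | succ n ih =>
      intro v h o
      by_cases hvd : v = d
      · subst hvd; exact ⟨o, Relation.ReflTransGen.refl⟩
      · have hst := gfun_step k hk d F hF v hvd o
        have h' : (gfun k hk d F)^[n] (gfun k hk d F v) = d := by
          rw [← Function.iterate_succ_apply]; exact h
        obtain ⟨i, hi⟩ := ih (gfun k hk d F v) h' (some (myf k hk d v o (Av k F v)))
        exact ⟨i, Relation.ReflTransGen.head hst hi⟩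
  exact main n s hn none

end Srr
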